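/- Let q be a power of a prime p, and let L = {b−s+1, b−s+2, …, b} with s ≤ b < q. Assume p does not divide C(b, s). If F ⊆ 2^[n] is a family such that for all distinct A, B ∈ F, |A \ B| is congruent modulo q to some element of L, then |F| ≤ Σ_{i=0}^{s} C(n−1, i). -/

import Mathlib

open Finset

private lemma prodNat_eq (c s : ℕ) :
    ∏ k ∈ range s, (c + 1 + k) = s.factorial * (c + s).choose s := by
  induction s with
  | zero => simp
  | succ s ih =>
    rw [prod_range_succ, ih]
    have h : (c + s + 1) * (c + s).choose s = (c + s + 1).choose (s + 1) * (s + 1) :=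
      Nat.add_one_mul_choose_eq (c + s) s
    calc s.factorial * (c + s).choose s * (c + 1 + s)
        = s.factorial * ((c + s + 1) * (c + s).choose s) := by ring_nf
      _ = s.factorial * ((c + s + 1).choose (s + 1) * (s + 1)) := by rw [h]
      _ = (s + 1).factorial * (c + (s + 1)).choose (s + 1) := by
          rw [Nat.factorial_succ]; ring_nf

private lemma factorization_factorial_sum (p a : ℕ) :
    (a.factorial).factorization p = ∑ k ∈ range a, (k + 1).factorization p := by
  induction a with
  | zero => simp
  | succ a ih =>
    rw [Nat.factorial_succ, Nat.factorization_mul (Nat.succ_ne_zero a) a.factorial_ne_zero,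
      sum_range_succ, ← ih]
    simp [add_comm]

private lemma lemJ {p m s a : ℕ} (hp : p.Prime) (has : a < s) (hsq : s < p ^ m) :
    (s - a).factorization p + (s.choose a).factorization p < m := by
  set e := (s - a).factorization p with he
  have hpe : p ^ e ∣ s - a := Nat.ordProj_dvd _ _
  have hem : e < m := by
    have h1 : p ^ e ≤ s - a := Nat.le_of_dvd (by omega) hpe
    have : p ^ e < p ^ m := lt_of_le_of_lt h1 (lt_of_le_of_lt (by omega) hsq)
    exact (Nat.pow_lt_pow_iff_right hp.one_lt).1 this
  have hs0 : s ≠ 0 := by omega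
  have hlog : Nat.log p s < m := Nat.log_lt_of_lt_pow hs0 hsq
  have hchoosepos : 0 < s.choose a := Nat.choose_pos has.le
  have hfin : FiniteMultiplicity p (s.choose a) :=
    Nat.finiteMultiplicity_iff.2 ⟨hp.ne_one, hchoosepos⟩
  have hbridge : (((s.choose a).factorization p : ℕ∞)) =
      (#(filter (fun i => p ^ i ≤ a % p ^ i + (s - a) % p ^ i) (Ico 1 m)) : ℕ∞) := by
    rw [← Nat.multiplicity_eq_factorization hp hchoosepos.ne']
    rw [← hfin.emultiplicity_eq_multiplicity]
    exact hp.emultiplicity_choose has.le hlog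
  have hcardeq : (s.choose a).factorization p =
      #(filter (fun i => p ^ i ≤ a % p ^ i + (s - a) % p ^ i) (Ico 1 m)) := by
    exact_mod_cast hbridge
  have hsubset : (filter (fun i => p ^ i ≤ a % p ^ i + (s - a) % p ^ i) (Ico 1 m)) ⊆
      Ico (e + 1) m := by
    intro i hi
    rw [mem_filter, mem_Ico] at hi
    rw [mem_Ico]
    refine ⟨?_, hi.1.2⟩
    by_contra hie
    push_neg at hie
    have hdvd : p ^ i ∣ s - a := dvd_trans (pow_dvd_pow p (by omega : i ≤ e)) hpe
    have hpos : 0 < p ^ i := Nat.pow_pos hp.pos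
    have hmod0 : (s - a) % p ^ i = 0 := Nat.mod_eq_zero_of_dvd hdvd
    have hlt : a % p ^ i < p ^ i := Nat.mod_lt _ hpos
    omega
  have hcard : (s.choose a).factorization p ≤ m - (e + 1) := by
    rw [hcardeq]
    exact le_trans (card_le_card hsubset) (le_of_eq (Nat.card_Ico _ _))
  omega


private def Qprod (c s u : ℕ) : ℤ := ∏ k ∈ range s, ((c : ℤ) + 1 + k - u)

private def ecoef (c s i : ℕ) : ℤ :=
  if i ≤ s then (-1) ^ i * (s.factorial : ℤ) * ((c + (s - i)).choose (s - i) : ℤ) else 0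

private lemma Qprod_delta (c s u : ℕ) :
    Qprod c (s + 1) (u + 1) = Qprod c (s + 1) u - (s + 1) * Qprod c s u := by
  have hA : Qprod c (s + 1) (u + 1) = (∏ k ∈ range s, ((c : ℤ) + 1 + k - u)) * ((c : ℤ) - u) := by
    unfold Qprod
    rw [prod_range_succ' (fun k => ((c : ℤ) + 1 + k - ↑(u + 1))) s]
    have h1 : ∀ k ∈ range s, ((c : ℤ) + 1 + ↑(k + 1) - ↑(u + 1)) = ((c : ℤ) + 1 + k - u) := by
      intro k _; push_cast; ring
    rw [prod_congr rfl h1]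
    push_cast; ring
  have hB : Qprod c (s + 1) u = (∏ k ∈ range s, ((c : ℤ) + 1 + k - u)) * ((c : ℤ) + 1 + s - u) := by
    unfold Qprod
    rw [prod_range_succ]
  rw [hA, hB]
  unfold Qprod
  push_cast
  ring

private lemma Qprod_star (s : ℕ) : ∀ c u : ℕ,
    Qprod c s u = ∑ i ∈ range (s + 1), ecoef c s i * (u.choose i : ℤ) := by
  induction s with
  | zero =>
    intro c u
    simp [Qprod, ecoef]
  | succ s ih =>
    intro c u
    induction u with
    | zero =>
      have hL : Qprod c (s + 1) 0 = ((∏ k ∈ range (s + 1), (c + 1 + k) : ℕ) : ℤ) := by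
        unfold Qprod; push_cast; apply prod_congr rfl; intro k _; push_cast; ring
      rw [hL, prodNat_eq c (s + 1)]
      rw [sum_range_succ' (fun i => ecoef c (s + 1) i * (((0 : ℕ)).choose i : ℤ)) (s + 1)]
      have h0 : ∑ i ∈ range (s + 1), ecoef c (s + 1) (i + 1) * (((0 : ℕ)).choose (i + 1) : ℤ) = 0 :=
        sum_eq_zero (fun i _ => by simp)
      rw [h0]
      simp [ecoef]
    | succ u ihu =>
      rw [Qprod_delta, ihu, ih c u]
      have pascal : ∀ i : ℕ, (((u + 1)).choose (i + 1) : ℤ) = (u.choose i : ℤ) + (u.choose (i + 1) : ℤ) := by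
        intro i; exact_mod_cast congrArg (Nat.cast (R := ℤ)) (Nat.choose_succ_succ u i)
      rw [sum_range_succ' (fun i => ecoef c (s + 1) i * (((u + 1)).choose i : ℤ)) (s + 1),
          sum_range_succ' (fun i => ecoef c (s + 1) i * ((u).choose i : ℤ)) (s + 1)]
      have hrw : ∀ i ∈ range (s + 1),
          ecoef c (s + 1) (i + 1) * (((u + 1)).choose (i + 1) : ℤ)
          = (ecoef c (s + 1) (i + 1) * ((u).choose (i + 1) : ℤ))
            + (ecoef c (s + 1) (i + 1) * ((u).choose i : ℤ)) := by
        intro i _; rw [pascal i]; ring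
      rw [sum_congr rfl hrw, sum_add_distrib]
      have hco : ∀ i ∈ range (s + 1),
          ecoef c (s + 1) (i + 1) * ((u).choose i : ℤ)
          = (-((s : ℤ) + 1)) * (ecoef c s i * ((u).choose i : ℤ)) := by
        intro i hi
        rw [mem_range] at hi
        have his : i ≤ s := by omega
        unfold ecoef
        rw [if_pos (by omega : i + 1 ≤ s + 1), if_pos his]
        have hsub : s + 1 - (i + 1) = s - i := by omega
        rw [hsub, Nat.factorial_succ]
        push_cast
        ring
      rw [sum_congr rfl hco, ← mul_sum]
      simp only [Nat.choose_zero_right, Nat.cast_one]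
      ring

private lemma Bcore (s : ℕ) (d : ℤ) : (s.factorial : ℤ) ∣ ∏ k ∈ range s, (d + (k : ℤ)) := by
  rcases le_or_gt 0 d with hd | hd
  · lift d to ℕ using hd with t
    rcases Nat.eq_zero_or_pos t with rfl | ht
    · cases s with
      | zero => simp
      | succ s =>
        have hzero : (∏ x ∈ range (s + 1), (((0 : ℕ) : ℤ) + (x : ℤ))) = 0 :=
          prod_eq_zero (mem_range.2 (Nat.succ_pos s)) (by simp)
        rw [hzero]
        exact dvd_zero _
    · have hcast : ∏ k ∈ range s, ((t : ℤ) + k) = ((∏ k ∈ range s, (t + k) : ℕ) : ℤ) := by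
        push_cast; rfl
      rw [hcast]
      have hprod : ∏ k ∈ range s, (t + k) = ∏ k ∈ range s, (t - 1 + 1 + k) := by
        apply prod_congr rfl; intro k _; omega
      rw [hprod, prodNat_eq]
      exact_mod_cast Int.natCast_dvd_natCast.2 (Dvd.intro _ rfl)
  · set t := (-d).toNat with ht
    have hdt : d = -(t : ℤ) := by
      have := Int.toNat_of_nonneg (by omega : (0:ℤ) ≤ -d)
      omega
    by_cases hts : t < s
    · have h0 : d + (t : ℤ) = 0 := by rw [hdt]; ring
      rw [prod_eq_zero (mem_range.2 hts) h0]
      exact dvd_zero _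
    · push_neg at hts
      have hcast : ((∏ i ∈ range s, (t - i) : ℕ) : ℤ) = ∏ i ∈ range s, ((t : ℤ) - i) := by
        rw [Nat.cast_prod]
        apply prod_congr rfl; intro i hi
        rw [Nat.cast_sub (le_trans (mem_range.1 hi).le hts)]
      have hneg : ∏ k ∈ range s, (d + (k : ℤ)) = (-1) ^ s * ∏ i ∈ range s, ((t : ℤ) - i) := by
        have h1 : ∀ k ∈ range s, d + (k : ℤ) = (-1) * ((t : ℤ) - k) := by
          intro k _; rw [hdt]; ring
        rw [prod_congr rfl h1, prod_mul_distrib, prod_const, card_range]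
      rw [hneg, ← hcast, ← Nat.descFactorial_eq_prod_range, Nat.descFactorial_eq_factorial_mul_choose]
      exact Dvd.dvd.mul_left (by exact_mod_cast Int.natCast_dvd_natCast.2 (Dvd.intro _ rfl)) _
private lemma lemB (c s u : ℕ) : (s.factorial : ℤ) ∣ Qprod c s u := by
  have h := Bcore s ((c : ℤ) + 1 - u)
  unfold Qprod
  have heq : ∀ k ∈ range s, ((c : ℤ) + 1 + k - u) = ((c : ℤ) + 1 - u) + (k : ℤ) := by
    intro k _; ring
  rw [prod_congr rfl heq]
  exact h

private lemma Qprod_zero_eq (c s : ℕ) :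
    Qprod c s 0 = ((s.factorial * (c + s).choose s : ℕ) : ℤ) := by
  unfold Qprod
  rw [← prodNat_eq, Nat.cast_prod]
  apply prod_congr rfl; intro k _; push_cast; ring

private lemma lemDiag {p : ℕ} (hp : p.Prime) {c s : ℕ} (hch : ¬ p ∣ (c + s).choose s) :
    ¬ ((p : ℤ) ^ ((s.factorial).factorization p + 1) ∣ Qprod c s 0) := by
  rw [Qprod_zero_eq]
  intro hdvd
  have hnat : p ^ ((s.factorial).factorization p + 1) ∣ s.factorial * (c + s).choose s := by
    have := Int.natCast_dvd_natCast.1 (by push_cast at hdvd ⊢; exact_mod_cast hdvd)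
    exact this
  have hne : s.factorial * (c + s).choose s ≠ 0 :=
    Nat.mul_ne_zero s.factorial_ne_zero (Nat.choose_pos (Nat.le_add_left s c)).ne'
  have hle := (Nat.Prime.pow_dvd_iff_le_factorization hp hne).1 hnat
  rw [Nat.factorization_mul s.factorial_ne_zero (Nat.choose_pos (Nat.le_add_left s c)).ne'] at hle
  simp only [Finsupp.coe_add, Pi.add_apply] at hle
  rw [Nat.factorization_eq_zero_of_not_dvd hch] at hle
  omega

private lemma lemA {p m q : ℕ} (hp : p.Prime) (hq : q = p ^ m) {c s u ℓ : ℕ}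
    (hsq : s < q) (hl1 : c + 1 ≤ ℓ) (hl2 : ℓ ≤ c + s) (hdvd : (q : ℤ) ∣ (ℓ : ℤ) - u) :
    (p : ℤ) ^ ((s.factorial).factorization p + 1) ∣ Qprod c s u := by
  set a := ℓ - (c + 1) with ha
  have has : a < s := by omega
  have hℓeq : ℓ = c + 1 + a := by omega
  set β := s - 1 - a with hβ
  have hqd : ∀ t : ℕ, 0 < t → t < q → ((p : ℤ) ^ (t.factorization p) ∣ (q : ℤ)) := by
    intro t ht htq
    have h1 : p ^ (t.factorization p) ∣ t := Nat.ordProj_dvd t p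
    have h2 : p ^ (t.factorization p) ≤ t := Nat.le_of_dvd ht h1
    have h3 : t.factorization p ≤ m := by
      by_contra hcon
      push_neg at hcon
      have : p ^ m < p ^ (t.factorization p) := (Nat.pow_lt_pow_iff_right hp.one_lt).2 hcon
      omega
    have h4 : p ^ (t.factorization p) ∣ q := by rw [hq]; exact pow_dvd_pow p h3
    exact_mod_cast Int.natCast_dvd_natCast.2 h4
  have hsplit : Qprod c s u = ((c : ℤ) + 1 + a - u) * ∏ k ∈ (range s).erase a, ((c : ℤ) + 1 + k - u) :=
    (mul_prod_erase _ _ (mem_range.2 has)).symm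
  have herase : (range s).erase a = range a ∪ Ico (a + 1) s := by
    ext k; simp only [mem_erase, mem_union, mem_range, mem_Ico]; omega
  have hdisj : Disjoint (range a) (Ico (a + 1) s) := by
    rw [disjoint_left]; intro k hk hk'
    rw [mem_range] at hk; rw [mem_Ico] at hk'; omega
  have hsum1 : ∑ k ∈ range a, (a - k).factorization p = (a.factorial).factorization p := by
    have h1 : ∀ k ∈ range a, (a - k).factorization p = ((a - 1 - k) + 1).factorization p := by
      intro k hk; rw [mem_range] at hk
      have hke : a - k = a - 1 - k + 1 := by omega
      rw [hke]
    rw [sum_congr rfl h1, sum_range_reflect (fun j => (j + 1).factorization p) a,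
        ← factorization_factorial_sum]
  have hpart1 : (p : ℤ) ^ ((a.factorial).factorization p) ∣ ∏ k ∈ range a, ((c : ℤ) + 1 + k - u) := by
    have hdd : ∏ k ∈ range a, (p : ℤ) ^ ((a - k).factorization p) ∣ ∏ k ∈ range a, ((c : ℤ) + 1 + k - u) := by
      apply prod_dvd_prod_of_dvd
      intro k hk
      rw [mem_range] at hk
      have heq : ((c : ℤ) + 1 + k - u) = ((ℓ : ℤ) - u) - ((a - k : ℕ) : ℤ) := by
        rw [hℓeq, Nat.cast_sub hk.le]; push_cast; ring
      rw [heq]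
      refine dvd_sub (dvd_trans (hqd (a - k) (by omega) (by omega)) hdvd) ?_
      have := Nat.ordProj_dvd (a - k) p
      exact_mod_cast Int.natCast_dvd_natCast.2 this
    rwa [prod_pow_eq_pow_sum, hsum1] at hdd
  have hpart2 : (p : ℤ) ^ ((β.factorial).factorization p) ∣ ∏ k ∈ Ico (a + 1) s, ((c : ℤ) + 1 + k - u) := by
    rw [prod_Ico_eq_prod_range]
    have hβeq : s - (a + 1) = β := by omega
    rw [hβeq]
    have hdd : ∏ j ∈ range β, (p : ℤ) ^ ((j + 1).factorization p) ∣ ∏ j ∈ range β, ((c : ℤ) + 1 + ↑(a + 1 + j) - u) := by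
      apply prod_dvd_prod_of_dvd
      intro j hj
      rw [mem_range] at hj
      have heq : ((c : ℤ) + 1 + ↑(a + 1 + j) - u) = ((ℓ : ℤ) - u) + ((j + 1 : ℕ) : ℤ) := by
        rw [hℓeq]; push_cast; ring
      rw [heq]
      refine dvd_add (dvd_trans (hqd (j + 1) (by omega) (by omega)) hdvd) ?_
      have := Nat.ordProj_dvd (j + 1) p
      exact_mod_cast Int.natCast_dvd_natCast.2 this
    rwa [prod_pow_eq_pow_sum, ← factorization_factorial_sum] at hdd
  have hfirst : (p : ℤ) ^ m ∣ ((c : ℤ) + 1 + a - u) := by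
    have heq : ((c : ℤ) + 1 + a - u) = ((ℓ : ℤ) - u) := by rw [hℓeq]; push_cast; ring
    rw [heq]
    refine dvd_trans ?_ hdvd
    have : (q : ℤ) = (p : ℤ) ^ m := by exact_mod_cast congrArg (Nat.cast (R := ℤ)) hq
    rw [this]
  have hcomb : (p : ℤ) ^ (m + ((a.factorial).factorization p + (β.factorial).factorization p)) ∣ Qprod c s u := by
    rw [hsplit, herase, prod_union hdisj, pow_add, pow_add]
    exact mul_dvd_mul hfirst (mul_dvd_mul hpart1 hpart2)
  refine dvd_trans (pow_dvd_pow _ ?_) hcomb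
  have hs1 : s.factorial = (s - a) * (s.choose a * (a.factorial * β.factorial)) := by
    have h1 : s.choose a * a.factorial * (s - a).factorial = s.factorial :=
      Nat.choose_mul_factorial_mul_factorial has.le
    have h2 : (s - a).factorial = (s - a) * β.factorial := by
      have hba : s - a = β + 1 := by omega
      rw [hba, Nat.factorial_succ]
    rw [← h1, h2]; ring
  have hJ := lemJ hp has (by rw [← hq]; exact hsq)
  have hsa : s - a ≠ 0 := by omega
  have hcne : s.choose a ≠ 0 := (Nat.choose_pos has.le).ne'
  have hane : a.factorial ≠ 0 := a.factorial_ne_zero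
  have hbne : β.factorial ≠ 0 := β.factorial_ne_zero
  have hfac : (s.factorial).factorization p
      = (s - a).factorization p + ((s.choose a).factorization p
        + ((a.factorial).factorization p + (β.factorial).factorization p)) := by
    conv_lhs => rw [hs1]
    rw [Nat.factorization_mul hsa (mul_ne_zero hcne (mul_ne_zero hane hbne)),
        Nat.factorization_mul hcne (mul_ne_zero hane hbne),
        Nat.factorization_mul hane hbne]
    simp
  omega

theorem stmt_9 (n p q m b s : ℕ) (hp : p.Prime) (hq : q = p ^ m)
    (hsb : s ≤ b) (hbq : b < q) (hchoose : ¬ p ∣ Nat.choose b s)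
    (F : Finset (Finset (Fin n)))
    (hF : ∀ A ∈ F, ∀ B ∈ F, A ≠ B →
      ∃ ℓ ∈ Finset.Icc (b - s + 1) b, (A \ B).card ≡ ℓ [MOD q]) :
    F.card ≤ ∑ i ∈ Finset.range (s + 1), (n - 1).choose i := by
  classical
  have hRHS1 : 1 ≤ ∑ i ∈ range (s + 1), (n - 1).choose i := by
    calc 1 = (n - 1).choose 0 := (Nat.choose_zero_right _).symm
      _ ≤ ∑ i ∈ range (s + 1), (n - 1).choose i :=
        single_le_sum (fun i _ => Nat.zero_le _) (mem_range.2 (Nat.succ_pos s))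
  by_cases hF1 : F.card ≤ 1
  · omega
  push_neg at hF1
  rcases Nat.eq_zero_or_pos n with rfl | hn
  · exfalso
    have hsub : F ⊆ {(∅ : Finset (Fin 0))} := by
      intro A _
      rw [mem_singleton]
      exact Finset.eq_empty_of_isEmpty A
    have := Finset.card_le_card hsub
    rw [Finset.card_singleton] at this
    omega
  set c := b - s with hc
  have hb : b = c + s := by omega
  set v := (s.factorial).factorization p with hv
  set x : Fin n := ⟨0, hn⟩ with hx
  haveI : Fact p.Prime := ⟨hp⟩
  set 𝒯 : Finset (Finset (Fin n)) := ((univ.erase x).powerset).filter (fun T => T.card ≤ s)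
    with h𝒯
  set N : Matrix ↥F ↥F ℤ :=
    fun A B => Qprod c s (((A : Finset (Fin n)) \ {x}) \ (B : Finset (Fin n))).card with hN
  set P : Matrix ↥F ↥𝒯 ℤ :=
    fun A T => if (T : Finset (Fin n)) ⊆ (A : Finset (Fin n)) \ {x}
      then ecoef c s (T : Finset (Fin n)).card else 0 with hP
  set K : Matrix ↥𝒯 ↥F ℤ :=
    fun T B => if Disjoint (T : Finset (Fin n)) (B : Finset (Fin n)) then 1 else 0 with hK
  -- the factorization N = P * K
  have hfact : N = P * K := by
    ext A B
    rw [Matrix.mul_apply]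
    set D : Finset (Fin n) := (A : Finset (Fin n)) \ {x} with hD
    have hstep1 : ∀ T : ↥𝒯, P A T * K T B
        = (fun T0 : Finset (Fin n) => if T0 ⊆ D ∧ Disjoint T0 (B : Finset (Fin n))
            then ecoef c s T0.card else 0) (T : Finset (Fin n)) := by
      intro T
      simp only [hP, hK]
      by_cases h1 : (T : Finset (Fin n)) ⊆ D <;>
        by_cases h2 : Disjoint (T : Finset (Fin n)) (B : Finset (Fin n)) <;>
        simp [h1, h2, ← hD]
    rw [sum_congr rfl (fun T _ => hstep1 T)]
    rw [sum_coe_sort 𝒯 (fun T0 => if T0 ⊆ D ∧ Disjoint T0 (B : Finset (Fin n))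
        then ecoef c s T0.card else 0)]
    rw [sum_ite, sum_const, smul_zero, add_zero]
    have hfilter : 𝒯.filter (fun T0 => T0 ⊆ D ∧ Disjoint T0 (B : Finset (Fin n)))
        = (D \ (B : Finset (Fin n))).powerset.filter (fun T0 => T0.card ≤ s) := by
      ext T0
      constructor
      · intro hT0
        rw [mem_filter] at hT0
        obtain ⟨hT𝒯, hTD, hTB⟩ := hT0
        rw [h𝒯, mem_filter, mem_powerset] at hT𝒯
        rw [mem_filter, mem_powerset]
        exact ⟨subset_sdiff.2 ⟨hTD, hTB⟩, hT𝒯.2⟩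
      · intro hT0
        rw [mem_filter, mem_powerset, subset_sdiff] at hT0
        rw [mem_filter]
        refine ⟨?_, hT0.1.1, hT0.1.2⟩
        rw [h𝒯, mem_filter, mem_powerset]
        refine ⟨?_, hT0.2⟩
        intro a ha
        have h5 := hT0.1.1 ha
        rw [hD, mem_sdiff, mem_singleton] at h5
        exact mem_erase.2 ⟨h5.2, mem_univ a⟩
    rw [hfilter]
    have hext : ∑ T0 ∈ (D \ (B : Finset (Fin n))).powerset.filter (fun T0 => T0.card ≤ s),
        ecoef c s T0.card
        = ∑ T0 ∈ (D \ (B : Finset (Fin n))).powerset, ecoef c s T0.card := by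
      apply sum_subset (filter_subset _ _)
      intro T0 hT0 hT0'
      rw [mem_filter] at hT0'
      have : ¬ T0.card ≤ s := fun hcard => hT0' ⟨hT0, hcard⟩
      rw [ecoef, if_neg this]
    rw [hext, sum_powerset_apply_card (fun i => ecoef c s i)]
    set u := (D \ (B : Finset (Fin n))).card with hu
    -- both sides equal the common extended sum
    have hR : ∑ i0 ∈ range (u + 1), u.choose i0 • ecoef c s i0
        = ∑ i0 ∈ range (u + s + 1), (u.choose i0 : ℤ) * ecoef c s i0 := by
      rw [sum_congr rfl (fun i0 _ => nsmul_eq_mul (u.choose i0) (ecoef c s i0))]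
      apply sum_subset (range_subset_range.2 (by omega))
      intro i0 _ hi0
      rw [mem_range] at hi0
      have : u < i0 := by omega
      rw [Nat.choose_eq_zero_of_lt this]
      simp
    have hL : Qprod c s u = ∑ i0 ∈ range (u + s + 1), (u.choose i0 : ℤ) * ecoef c s i0 := by
      rw [Qprod_star s c u]
      rw [sum_congr rfl (fun i0 _ => mul_comm (ecoef c s i0) ((u.choose i0 : ℤ)))]
      apply sum_subset (range_subset_range.2 (by omega))
      intro i0 _ hi0
      rw [mem_range] at hi0
      have : ¬ i0 ≤ s := by omega
      rw [ecoef, if_neg this]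
      simp
    rw [hR, ← hL]
  -- entry divisibility facts
  have hpv_dvd : ∀ A B : ↥F, (p : ℤ) ^ v ∣ N A B := by
    intro A B
    refine dvd_trans ?_ (lemB c s _)
    have : (p : ℕ) ^ v ∣ s.factorial := Nat.ordProj_dvd _ _
    exact_mod_cast Int.natCast_dvd_natCast.2 this
  have hsq : s < q := by omega
  have hgood : ∀ A B : ↥F, A ≠ B → ¬(x ∈ (A : Finset (Fin n)) ∧ x ∉ (B : Finset (Fin n))) →
      (p : ℤ) ^ (v + 1) ∣ N A B := by
    intro A B hAB hcase
    obtain ⟨ℓ, hℓmem, hmod⟩ := hF A A.2 B B.2 (fun h => hAB (Subtype.ext h))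
    rw [mem_Icc] at hℓmem
    have hxAB : x ∉ (A : Finset (Fin n)) \ (B : Finset (Fin n)) := by
      rw [mem_sdiff]; tauto
    have hNd : ((A : Finset (Fin n)) \ {x}) \ (B : Finset (Fin n))
        = (A : Finset (Fin n)) \ (B : Finset (Fin n)) := by
      rw [sdiff_sdiff_comm, Finset.sdiff_singleton_eq_erase,
        Finset.erase_eq_of_notMem hxAB]
    rw [hN]
    simp only
    rw [hNd]
    exact lemA hp hq hsq (by omega) (by omega) (Nat.ModEq.dvd hmod)
  have hdiag : ∀ A : ↥F, ¬ ((p : ℤ) ^ (v + 1) ∣ N A A) := by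
    intro A
    have hempty : ((A : Finset (Fin n)) \ {x}) \ (A : Finset (Fin n)) = ∅ := by
      apply eq_empty_of_forall_notMem
      intro a
      rw [mem_sdiff, mem_sdiff]
      tauto
    rw [hN]
    simp only
    rw [hempty, Finset.card_empty]
    exact lemDiag hp (by rw [← hb]; exact hchoose)
  -- the scaled matrix
  set M : Matrix ↥F ↥F ℤ := fun A B => N A B / (p : ℤ) ^ v with hM
  have hNM : ∀ A B, N A B = (p : ℤ) ^ v * M A B := by
    intro A B
    rw [hM]
    exact (Int.mul_ediv_cancel' (hpv_dvd A B)).symm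
  have hpne : ((p : ℤ)) ≠ 0 := Int.natCast_ne_zero.2 hp.ne_zero
  have hpvne : ((p : ℤ) ^ v) ≠ 0 := pow_ne_zero _ hpne
  set Mp : Matrix ↥F ↥F (ZMod p) := M.map ⇑(Int.castRingHom (ZMod p)) with hMp
  have hMp_off : ∀ A B : ↥F, A ≠ B →
      ¬(x ∈ (A : Finset (Fin n)) ∧ x ∉ (B : Finset (Fin n))) → Mp A B = 0 := by
    intro A B hAB hcase
    have h1 : (p : ℤ) ^ (v + 1) ∣ N A B := hgood A B hAB hcase
    rw [hNM A B, pow_succ] at h1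
    have h2 : (p : ℤ) ∣ M A B := (mul_dvd_mul_iff_left hpvne).1 h1
    show ((M A B : ℤ) : ZMod p) = 0
    rwa [ZMod.intCast_zmod_eq_zero_iff_dvd]
  have hMp_diag : ∀ A : ↥F, Mp A A ≠ 0 := by
    intro A h0
    have h0' : ((M A A : ℤ) : ZMod p) = 0 := h0
    have h2 : (p : ℤ) ∣ M A A := by
      rwa [ZMod.intCast_zmod_eq_zero_iff_dvd] at h0'
    exact hdiag A (by rw [hNM A A, pow_succ]; exact mul_dvd_mul_left _ h2)
  -- determinant of Mp
  have hdetMp : Mp.det ≠ 0 := by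
    rw [Matrix.twoBlockTriangular_det Mp (fun A => x ∈ (A : Finset (Fin n)))
      (by
        intro i hi j hj
        by_cases hij : i = j
        · subst hij; exact absurd hj hi
        · exact hMp_off i j hij (fun hc => hi hc.1))]
    apply mul_ne_zero
    · have hblock : (Mp.toSquareBlockProp (fun A => x ∈ (A : Finset (Fin n))))
          = Matrix.diagonal (fun i => Mp i.1 i.1) := by
        ext i j
        by_cases hij : i = j
        · subst hij
          simp [Matrix.toSquareBlockProp]
        · rw [Matrix.diagonal_apply_ne _ hij]
          exact hMp_off i.1 j.1 (fun h => hij (Subtype.ext h)) (fun hc => hc.2 j.2)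
      rw [hblock, Matrix.det_diagonal]
      exact prod_ne_zero_iff.2 (fun i _ => hMp_diag i.1)
    · have hblock : (Mp.toSquareBlockProp (fun A => ¬ x ∈ (A : Finset (Fin n))))
          = Matrix.diagonal (fun i => Mp i.1 i.1) := by
        ext i j
        by_cases hij : i = j
        · subst hij
          simp [Matrix.toSquareBlockProp]
        · rw [Matrix.diagonal_apply_ne _ hij]
          exact hMp_off i.1 j.1 (fun h => hij (Subtype.ext h)) (fun hc => i.2 hc.1)
      rw [hblock, Matrix.det_diagonal]
      exact prod_ne_zero_iff.2 (fun i _ => hMp_diag i.1)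
  have hdetM : M.det ≠ 0 := by
    intro h0
    apply hdetMp
    have : Mp.det = ((M.det : ℤ) : ZMod p) := by
      rw [hMp, ← RingHom.mapMatrix_apply, ← RingHom.map_det]
      rfl
    rw [this, h0]
    simp
  have hdetN : N.det ≠ 0 := by
    have hNsmul : N = ((p : ℤ) ^ v) • M := by
      ext A B
      rw [Matrix.smul_apply, smul_eq_mul]
      exact hNM A B
    rw [hNsmul, Matrix.det_smul]
    exact mul_ne_zero (pow_ne_zero _ hpvne) hdetM
  -- over ℚ
  set Nq : Matrix ↥F ↥F ℚ := N.map ⇑(Int.castRingHom ℚ) with hNq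
  set Pq : Matrix ↥F ↥𝒯 ℚ := P.map ⇑(Int.castRingHom ℚ) with hPq
  set Kq : Matrix ↥𝒯 ↥F ℚ := K.map ⇑(Int.castRingHom ℚ) with hKq
  have hdetNq : Nq.det ≠ 0 := by
    have : Nq.det = ((N.det : ℤ) : ℚ) := by
      rw [hNq, ← RingHom.mapMatrix_apply, ← RingHom.map_det]
      rfl
    rw [this]
    exact Int.cast_ne_zero.2 hdetN
  haveI := Matrix.invertibleOfIsUnitDet Nq (isUnit_iff_ne_zero.2 hdetNq)
  have hmulq : Nq = Pq * Kq := by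
    rw [hNq, hPq, hKq, hfact]
    exact Matrix.map_mul
  have hone : (1 : Matrix ↥F ↥F ℚ) = (⅟Nq * Pq) * Kq := by
    rw [Matrix.mul_assoc, ← hmulq, invOf_mul_self]
  have hrank : Fintype.card ↥F ≤ Fintype.card ↥𝒯 := by
    calc Fintype.card ↥F = (1 : Matrix ↥F ↥F ℚ).rank := Matrix.rank_one.symm
      _ = ((⅟Nq * Pq) * Kq).rank := by rw [← hone]
      _ ≤ Kq.rank := Matrix.rank_mul_le_right _ _
      _ ≤ Fintype.card ↥𝒯 := Matrix.rank_le_card_height Kq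
  rw [Fintype.card_coe, Fintype.card_coe] at hrank
  refine le_trans hrank ?_
  have hsub : 𝒯 ⊆ (range (s + 1)).biUnion (fun i => powersetCard i (univ.erase x)) := by
    intro T hT
    rw [h𝒯, mem_filter, mem_powerset] at hT
    rw [mem_biUnion]
    exact ⟨T.card, mem_range.2 (by omega), mem_powersetCard.2 ⟨hT.1, rfl⟩⟩
  calc 𝒯.card ≤ ((range (s + 1)).biUnion (fun i => powersetCard i (univ.erase x))).card :=
        card_le_card hsub
    _ ≤ ∑ i ∈ range (s + 1), (powersetCard i (univ.erase x)).card := card_biUnion_le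
    _ = ∑ i ∈ range (s + 1), (n - 1).choose i := by
        apply sum_congr rfl
        intro i _
        rw [card_powersetCard, card_erase_of_mem (mem_univ x), Finset.card_univ, Fintype.card_fin]
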